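/- Let f : ℝ → ℝ be continuous with f(x+1) - f(x) = l for all x, where l is a nonzero integer, let α be irrational, and define T : 𝕋² → 𝕋² by T(x,y) = (x+α, f(x)+y). If f has bounded variation on [0,1], then for all sufficiently small ε > 0 and all n ≥ 1, the maximal cardinality s(n,ε) of an (n,ε)-separated set of (𝕋², T) satisfies s(n,ε) ≤ 20(V+1)n/ε², where V is the total variation of f on [0,1]. -/

import Mathlib

open Set

/-- The unit circle `ℝ/ℤ`. -/
abbrev Torus1 := AddCircle (1:ℝ)

/-- The 2-torus with the max (product) metric. -/
abbrev Torus2 := Torus1 × Torus1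

/-- `E` is an `(n, ε)`-separated set for `T`: any two distinct points of `E` are
`ε`-apart in the Bowen metric `d_n`. -/
def IsSeparatedSet (T : Torus2 → Torus2) (n : ℕ) (ε : ℝ) (E : Finset Torus2) : Prop :=
  ∀ p ∈ E, ∀ q ∈ E, p ≠ q → ∃ i < n, ε < dist (T^[i] p) (T^[i] q)

/- ### Auxiliary lemmas on bounded variation -/

lemma evar_add_const (f : ℝ → ℝ) (c : ℝ) (s : Set ℝ) :
    eVariationOn (fun x => f x + c) s = eVariationOn f s := by
  simp only [eVariationOn]
  congr 1
  ext p
  simp [edist_add_right]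

lemma evar_translate (f : ℝ → ℝ) (c a b : ℝ) :
    eVariationOn (fun x => f (x + c)) (Icc a b) = eVariationOn f (Icc (a+c) (b+c)) := by
  have h := eVariationOn.comp_eq_of_monotoneOn f (fun x => x + c)
    (fun x _ y _ hxy => by simpa using hxy : MonotoneOn (fun x => x + c) (Icc a b))
  rw [show ((fun x => x + c) '' Icc a b) = Icc (a+c) (b+c) from by
    rw [Set.image_add_const_Icc]] at h
  exact h

lemma evar_shift (f : ℝ → ℝ) (l : ℝ) (hfl : ∀ x, f (x + 1) - f x = l) (a b : ℝ) :
    eVariationOn f (Icc (a+1) (b+1)) = eVariationOn f (Icc a b) := by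
  rw [← evar_translate f 1 a b,
    show (fun x => f (x + 1)) = fun x => f x + l from funext fun x => by
      have := hfl x; linarith, evar_add_const]

lemma evar_unit (f : ℝ → ℝ) (l : ℝ) (hfl : ∀ x, f (x + 1) - f x = l) :
    ∀ m : ℤ, eVariationOn f (Icc (m:ℝ) ((m:ℝ)+1)) = eVariationOn f (Icc 0 1) := by
  intro m
  induction m using Int.induction_on with
  | zero => norm_num
  | succ k ih =>
    push_cast
    push_cast at ih
    rw [evar_shift f l hfl (k:ℝ) ((k:ℝ)+1)]
    exact ih
  | pred k ih =>
    push_cast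
    push_cast at ih
    have h := evar_shift f l hfl (-(k:ℝ)-1) (-(k:ℝ))
    rw [show (-(k:ℝ)-1+1 : ℝ) = -(k:ℝ) by ring] at h
    rw [show (-(k:ℝ)-1+1 : ℝ) = -(k:ℝ) by ring, ← h]
    exact ih

lemma evar_le_nsmul (f : ℝ → ℝ) (l : ℝ) (hfl : ∀ x, f (x + 1) - f x = l) :
    ∀ (N : ℕ) (m : ℤ), eVariationOn f (Icc (m:ℝ) ((m:ℝ)+N)) ≤ N * eVariationOn f (Icc 0 1) := by
  intro N
  induction N with
  | zero =>
    intro m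
    simp only [Nat.cast_zero, add_zero, zero_mul]
    rw [Set.Icc_self]
    exact le_of_eq (eVariationOn.subsingleton f subsingleton_singleton)
  | succ N ih =>
    intro m
    have hab : (m:ℝ) ≤ (m:ℝ)+N := by
      have : (0:ℝ) ≤ N := Nat.cast_nonneg N
      linarith
    have hbc : (m:ℝ)+N ≤ (m:ℝ)+(N+1:ℕ) := by push_cast; linarith
    have key := eVariationOn.Icc_add_Icc f (s := Icc (m:ℝ) ((m:ℝ)+(N+1:ℕ))) hab hbc
      ⟨hab, hbc⟩
    rw [Set.inter_eq_right.mpr (Icc_subset_Icc le_rfl hbc),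
      Set.inter_eq_right.mpr (Icc_subset_Icc hab le_rfl),
      Set.inter_eq_right.mpr (Icc_subset_Icc le_rfl le_rfl)] at key
    have hunit : eVariationOn f (Icc ((m:ℝ)+N) ((m:ℝ)+(N+1:ℕ))) = eVariationOn f (Icc 0 1) := by
      have := evar_unit f l hfl (m + N)
      push_cast at this
      rw [show ((m:ℝ)+((N:ℕ)+1:ℕ)) = ((m:ℝ)+N)+1 by push_cast; ring]
      exact this
    calc eVariationOn f (Icc (m:ℝ) ((m:ℝ)+(N+1:ℕ)))
        = eVariationOn f (Icc (m:ℝ) ((m:ℝ)+N)) + eVariationOn f (Icc ((m:ℝ)+N) ((m:ℝ)+(N+1:ℕ))) := key.symm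
      _ ≤ N * eVariationOn f (Icc 0 1) + 1 * eVariationOn f (Icc 0 1) := by
          rw [hunit, one_mul]; exact add_le_add (ih m) le_rfl
      _ = (N+1:ℕ) * eVariationOn f (Icc 0 1) := by
          rw [← add_mul]; norm_cast

lemma evar_fin (f : ℝ → ℝ) (l : ℝ) (hfl : ∀ x, f (x + 1) - f x = l)
    (hbv : BoundedVariationOn f (Icc (0:ℝ) 1)) (a b : ℝ) :
    eVariationOn f (Icc a b) ≠ ⊤ := by
  set N : ℕ := ⌈b - (⌊a⌋:ℝ)⌉₊ with hN
  have hsub : Icc a b ⊆ Icc ((⌊a⌋:ℤ):ℝ) (((⌊a⌋:ℤ):ℝ) + N) := by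
    intro x hx
    constructor
    · exact le_trans (Int.floor_le a) hx.1
    · refine le_trans hx.2 ?_
      have := Nat.le_ceil (b - (⌊a⌋:ℝ))
      linarith
  have h1 := eVariationOn.mono f hsub
  have h2 := evar_le_nsmul f l hfl N ⌊a⌋
  refine ne_top_of_le_ne_top ?_ (h1.trans h2)
  exact ENNReal.mul_ne_top (by simp) hbv

/- ### Auxiliary lemmas on the torus -/

noncomputable def lift1 (z : Torus1) : ℝ := (AddCircle.equivIco 1 0 z : ℝ)

lemma lift1_mem (z : Torus1) : lift1 z ∈ Ico (0:ℝ) 1 := by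
  simpa [lift1] using (AddCircle.equivIco 1 0 z).2

lemma lift1_spec (z : Torus1) : ((lift1 z : ℝ) : Torus1) = z := by
  have := (AddCircle.equivIco 1 0).symm_apply_apply z
  simpa [AddCircle.equivIco, QuotientAddGroup.equivIcoMod, lift1] using this

lemma norm_coe_le (x : ℝ) : ‖(x : Torus1)‖ ≤ |x| := by
  rw [AddCircle.norm_eq]
  simpa using round_le x 0

lemma dist_coe_le (a b : ℝ) : dist ((a:ℝ) : Torus1) ((b:ℝ) : Torus1) ≤ |a - b| := by
  rw [dist_eq_norm]
  exact norm_coe_le (a - b)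

/- ### Birkhoff sums and the iterate formula -/

noncomputable def Sbirk (f : ℝ → ℝ) (α : ℝ) (i : ℕ) (x : ℝ) : ℝ :=
  ∑ j ∈ Finset.range i, f (x + j * α)

lemma iter_formula (f : ℝ → ℝ) (α : ℝ) (F : Torus1 → Torus1)
    (hF : ∀ x : ℝ, F (x : Torus1) = ((f x : ℝ) : Torus1))
    (T : Torus2 → Torus2)
    (hT : ∀ p : Torus2, T p = (p.1 + (α : Torus1), F p.1 + p.2)) :
    ∀ (i : ℕ) (x y : ℝ), T^[i] ((x : Torus1), (y : Torus1)) =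
      (((x + i * α : ℝ) : Torus1), ((y + Sbirk f α i x : ℝ) : Torus1)) := by
  intro i
  induction i with
  | zero => intro x y; simp [Sbirk]
  | succ i ih =>
    intro x y
    rw [Function.iterate_succ_apply', ih, hT]
    refine Prod.ext ?_ ?_ <;> simp only [Prod.fst, Prod.snd]
    · show ((x + i*α : ℝ) : Torus1) + ((α : ℝ) : Torus1) = _
      rw [show ((x + i*α : ℝ) : Torus1) + ((α : ℝ) : Torus1) = ((x + i*α + α : ℝ) : Torus1) from rfl]
      congr 1
      push_cast
      ring
    · show F ((x + i*α : ℝ) : Torus1) + ((y + Sbirk f α i x : ℝ) : Torus1) = _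
      rw [hF]
      rw [show ((f (x + i*α) : ℝ) : Torus1) + ((y + Sbirk f α i x : ℝ) : Torus1)
        = ((f (x + i*α) + (y + Sbirk f α i x) : ℝ) : Torus1) from rfl]
      congr 1
      rw [Sbirk, Sbirk, Finset.sum_range_succ]
      ring

set_option maxHeartbeats 2000000 in
theorem stmt1 (l : ℤ) (hl : l ≠ 0) (α : ℝ) (hα : Irrational α)
    (f : ℝ → ℝ) (hf : Continuous f) (hfl : ∀ x : ℝ, f (x + 1) - f x = l)
    (hbv : BoundedVariationOn f (Icc (0:ℝ) 1))
    (V : ℝ) (hV : V = (eVariationOn f (Icc (0:ℝ) 1)).toReal)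
    (F : Torus1 → Torus1) (hF : ∀ x : ℝ, F (x : Torus1) = ((f x : ℝ) : Torus1))
    (T : Torus2 → Torus2)
    (hT : ∀ p : Torus2, T p = (p.1 + (α : Torus1), F p.1 + p.2)) :
    ∃ ε₀ > 0, ∀ ε, 0 < ε → ε ≤ ε₀ → ∀ n : ℕ, 1 ≤ n →
      ∀ E : Finset Torus2, IsSeparatedSet T n ε E →
        (E.card : ℝ) ≤ 20 * (V + 1) * n / ε ^ 2 := by
  classical
  refine ⟨1, one_pos, ?_⟩
  intro ε hε hε1 n hn E hE
  -- real-valued variation and its basic properties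
  have hfin : ∀ a b : ℝ, eVariationOn f (Icc a b) ≠ ⊤ := evar_fin f (l:ℝ) hfl hbv
  set v : ℝ → ℝ → ℝ := fun a b => (eVariationOn f (Icc a b)).toReal with hvdef
  have hv0 : ∀ a b, 0 ≤ v a b := fun a b => ENNReal.toReal_nonneg
  have hvself : ∀ a, v a a = 0 := by
    intro a
    rw [hvdef]
    simp only
    rw [Icc_self, eVariationOn.subsingleton f subsingleton_singleton]
    simp
  have hvmono : ∀ {a b c d : ℝ}, Icc a b ⊆ Icc c d → v a b ≤ v c d := by
    intro a b c d h
    exact ENNReal.toReal_mono (hfin c d) (eVariationOn.mono f h)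
  have hvadd : ∀ {a b c : ℝ}, a ≤ b → b ≤ c → v a c = v a b + v b c := by
    intro a b c hab hbc
    have key := eVariationOn.Icc_add_Icc f (s := Icc a c) hab hbc ⟨hab, hbc⟩
    rw [Set.inter_eq_right.mpr (Icc_subset_Icc le_rfl hbc),
      Set.inter_eq_right.mpr (Icc_subset_Icc hab le_rfl),
      Set.inter_eq_right.mpr (Icc_subset_Icc le_rfl le_rfl)] at key
    rw [hvdef]
    simp only
    rw [← key, ENNReal.toReal_add (hfin _ _) (hfin _ _)]
  have hvdist : ∀ {a b : ℝ}, a ≤ b → |f a - f b| ≤ v a b := by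
    intro a b hab
    have h := eVariationOn.edist_le f (s := Icc a b) (x := a) (y := b)
      (Set.mem_Icc.mpr ⟨le_rfl, hab⟩) (Set.mem_Icc.mpr ⟨hab, le_rfl⟩)
    rw [edist_dist] at h
    have h2 := ENNReal.toReal_mono (hfin a b) h
    rwa [ENNReal.toReal_ofReal dist_nonneg, Real.dist_eq] at h2
  have hVnn : 0 ≤ V := hV ▸ ENNReal.toReal_nonneg
  have hvunit : ∀ m : ℤ, v (m:ℝ) ((m:ℝ)+1) = V := by
    intro m
    rw [hV]
    exact congrArg ENNReal.toReal (evar_unit f (l:ℝ) hfl m)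
  have hv3 : ∀ c d : ℝ, d ≤ c + 2 → v c d ≤ 3 * V := by
    intro c d hd
    have hfl1 : (⌊c⌋:ℝ) ≤ c := Int.floor_le c
    have hfl2 : c < (⌊c⌋:ℝ) + 1 := Int.lt_floor_add_one c
    have h1 : v c d ≤ v ((⌊c⌋:ℝ)) ((⌊c⌋:ℝ)+2+1) :=
      hvmono (Icc_subset_Icc hfl1 (by linarith))
    have u1 := hvunit ⌊c⌋
    have u2 := hvunit (⌊c⌋+1)
    have u3 := hvunit (⌊c⌋+2)
    push_cast at u1 u2 u3
    rw [show ((⌊c⌋:ℝ)+1+1 : ℝ) = (⌊c⌋:ℝ)+2 by ring] at u2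
    have s1 : v ((⌊c⌋:ℝ)) ((⌊c⌋:ℝ)+2+1) = v ((⌊c⌋:ℝ)) ((⌊c⌋:ℝ)+1) + v ((⌊c⌋:ℝ)+1) ((⌊c⌋:ℝ)+2+1) :=
      hvadd (by linarith) (by linarith)
    have s2 : v ((⌊c⌋:ℝ)+1) ((⌊c⌋:ℝ)+2+1) = v ((⌊c⌋:ℝ)+1) ((⌊c⌋:ℝ)+2) + v ((⌊c⌋:ℝ)+2) ((⌊c⌋:ℝ)+2+1) :=
      hvadd (by linarith) (by linarith)
    linarith
  -- telescoping sums of variations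
  have htel : ∀ (c : ℝ) (m : ℕ),
      ∑ k ∈ Finset.range m, v (c + (k:ℝ)*ε) (c + (k:ℝ)*ε + ε) = v c (c + (m:ℝ)*ε) := by
    intro c m
    induction m with
    | zero => simp [hvself]
    | succ m ih =>
      rw [Finset.sum_range_succ, ih,
        show c + ((m+1:ℕ):ℝ)*ε = (c + (m:ℝ)*ε) + ε by push_cast; ring]
      have hmε : (0:ℝ) ≤ (m:ℝ)*ε := by positivity
      exact (hvadd (by linarith) (by linarith)).symm
  -- lifts and combinatorial data
  set A : Torus2 → ℝ := fun p => lift1 p.1 with hA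
  set B : Torus2 → ℝ := fun p => lift1 p.2 with hB
  set K : ℕ := ⌈1/ε⌉₊ with hK
  set M : ℕ := ⌈2/ε⌉₊ with hM
  set w : ℝ → ℝ → ℝ := fun x x' => ∑ j ∈ Finset.range n, v (x + (j:ℝ)*α) (x' + (j:ℝ)*α) with hw
  set col : Torus2 → ℕ := fun p => ⌊A p / ε⌋₊ with hcol
  set yc : Torus2 → ℕ := fun p => ⌊B p / (ε/2)⌋₊ with hyc
  have hA0 : ∀ p : Torus2, 0 ≤ A p ∧ A p < 1 := by
    intro p
    have h := lift1_mem p.1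
    rw [Set.mem_Ico] at h
    exact h
  have hB0 : ∀ p : Torus2, 0 ≤ B p ∧ B p < 1 := by
    intro p
    have h := lift1_mem p.2
    rw [Set.mem_Ico] at h
    exact h
  have hKge : 1/ε ≤ (K:ℝ) := Nat.le_ceil _
  have hMge : 2/ε ≤ (M:ℝ) := Nat.le_ceil _
  have hKle : (K:ℝ) ≤ 2/ε := by
    have h := Nat.ceil_lt_add_one (by positivity : (0:ℝ) ≤ 1/ε)
    have : (1:ℝ) ≤ 1/ε := by
      rw [le_div_iff₀ hε]; linarith
    have h3 : (2:ℝ)/ε = 1/ε + 1/ε := by ring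
    linarith
  have hMle : (M:ℝ) ≤ 3/ε := by
    have h := Nat.ceil_lt_add_one (by positivity : (0:ℝ) ≤ 2/ε)
    have : (1:ℝ) ≤ 1/ε := by
      rw [le_div_iff₀ hε]; linarith
    have h2 : (3:ℝ)/ε = 2/ε + 1/ε := by ring
    linarith
  have hcol_mem : ∀ p : Torus2, col p < K := by
    intro p
    simp only [hcol]
    rw [Nat.floor_lt (div_nonneg (hA0 p).1 hε.le)]
    calc A p / ε < 1/ε := (div_lt_div_iff_of_pos_right hε).mpr (hA0 p).2
      _ ≤ (K:ℝ) := hKge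
  have hyc_mem : ∀ p : Torus2, yc p < M := by
    intro p
    simp only [hyc]
    rw [Nat.floor_lt (div_nonneg (hB0 p).1 (by positivity))]
    calc B p / (ε/2) < 1/(ε/2) := (div_lt_div_iff_of_pos_right (by positivity)).mpr (hB0 p).2
      _ = 2/ε := one_div_div ε 2
      _ ≤ (M:ℝ) := hMge
  have hcolb : ∀ p : Torus2, (col p : ℝ)*ε ≤ A p ∧ A p < (col p : ℝ)*ε + ε := by
    intro p
    have h1 : ((col p : ℕ):ℝ) ≤ A p / ε := by
      simp only [hcol]; exact Nat.floor_le (div_nonneg (hA0 p).1 hε.le)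
    have h2 : A p / ε < (col p : ℝ) + 1 := by
      simp only [hcol]; exact Nat.lt_floor_add_one (A p / ε)
    have he : A p / ε * ε = A p := div_mul_cancel₀ _ hε.ne'
    constructor
    · have h3 := mul_le_mul_of_nonneg_right h1 hε.le
      rwa [he] at h3
    · calc A p = A p/ε*ε := he.symm
        _ < ((col p:ℝ)+1)*ε := mul_lt_mul_of_pos_right h2 hε
        _ = (col p:ℝ)*ε + ε := by ring
  have hycb : ∀ p : Torus2, (yc p : ℝ)*(ε/2) ≤ B p ∧ B p < (yc p : ℝ)*(ε/2) + ε/2 := by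
    intro p
    have hε2 : (0:ℝ) < ε/2 := by positivity
    have h1 : ((yc p : ℕ):ℝ) ≤ B p / (ε/2) := by
      simp only [hyc]; exact Nat.floor_le (div_nonneg (hB0 p).1 (by positivity))
    have h2 : B p / (ε/2) < (yc p : ℝ) + 1 := by
      simp only [hyc]; exact Nat.lt_floor_add_one (B p / (ε/2))
    have he : B p / (ε/2) * (ε/2) = B p := div_mul_cancel₀ _ hε2.ne'
    constructor
    · have h3 := mul_le_mul_of_nonneg_right h1 hε2.le
      rwa [he] at h3
    · calc B p = B p/(ε/2)*(ε/2) := he.symm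
        _ < ((yc p:ℝ)+1)*(ε/2) := mul_lt_mul_of_pos_right h2 hε2
        _ = (yc p:ℝ)*(ε/2) + ε/2 := by ring
  -- properties of w
  have hw0 : ∀ x x' : ℝ, 0 ≤ w x x' := fun x x' => Finset.sum_nonneg fun j _ => hv0 _ _
  have hwself : ∀ x : ℝ, w x x = 0 := fun x => Finset.sum_eq_zero fun j _ => hvself _
  have hwadd : ∀ {x y z : ℝ}, x ≤ y → y ≤ z → w x z = w x y + w y z := by
    intro x y z h1 h2
    simp only [hw]
    rw [← Finset.sum_add_distrib]
    exact Finset.sum_congr rfl fun j _ => hvadd (by linarith) (by linarith)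
  have hwmono : ∀ {x y y' : ℝ}, y ≤ y' → w x y ≤ w x y' := by
    intro x y y' h
    exact Finset.sum_le_sum fun j _ => hvmono (Icc_subset_Icc le_rfl (by linarith))
  have hwS : ∀ x x' : ℝ, x ≤ x' → ∀ i, i ≤ n → |Sbirk f α i x - Sbirk f α i x'| ≤ w x x' := by
    intro x x' hle i hi
    rw [Sbirk, Sbirk, ← Finset.sum_sub_distrib]
    calc |∑ j ∈ Finset.range i, (f (x + (j:ℝ)*α) - f (x' + (j:ℝ)*α))|
        ≤ ∑ j ∈ Finset.range i, |f (x + (j:ℝ)*α) - f (x' + (j:ℝ)*α)| :=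
          Finset.abs_sum_le_sum_abs _ _
      _ ≤ ∑ j ∈ Finset.range i, v (x + (j:ℝ)*α) (x' + (j:ℝ)*α) :=
          Finset.sum_le_sum fun j _ => hvdist (by linarith)
      _ ≤ w x x' := Finset.sum_le_sum_of_subset_of_nonneg
          (Finset.range_subset_range.mpr hi) (fun j _ _ => hv0 _ _)
  -- the key estimate for a pair of points in the same cell
  have hpair : ∀ p ∈ E, ∀ q ∈ E, p ≠ q → col p = col q → yc p = yc q → A p ≤ A q →
      ε/2 < w (A p) (A q) := by
    intro p hp q hq hpq hc hy hle
    obtain ⟨i, hi, hdist⟩ := hE p hp q hq hpq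
    have hp1 : (((A p : ℝ) : Torus1), ((B p : ℝ) : Torus1)) = p := by
      simp only [hA, hB]
      exact Prod.ext (lift1_spec p.1) (lift1_spec p.2)
    have hq1 : (((A q : ℝ) : Torus1), ((B q : ℝ) : Torus1)) = q := by
      simp only [hA, hB]
      exact Prod.ext (lift1_spec q.1) (lift1_spec q.2)
    rw [← hp1, ← hq1, iter_formula f α F hF T hT i (A p) (B p),
      iter_formula f α F hF T hT i (A q) (B q), Prod.dist_eq] at hdist
    dsimp only at hdist
    rw [lt_max_iff] at hdist
    have hABd : ε < dist ((B p + Sbirk f α i (A p) : ℝ) : Torus1)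
        ((B q + Sbirk f α i (A q) : ℝ) : Torus1) := by
      rcases hdist with h | h
      · exfalso
        have hd1 := dist_coe_le (A p + (i:ℝ)*α) (A q + (i:ℝ)*α)
        have habs : |A p + (i:ℝ)*α - (A q + (i:ℝ)*α)| < ε := by
          rw [show A p + (i:ℝ)*α - (A q + (i:ℝ)*α) = A p - A q by ring, abs_lt]
          have c1 := hcolb p
          have c2 := hcolb q
          rw [hc] at c1
          constructor <;> [linarith [c1.1, c2.2]; linarith [c1.2, c2.1]]
        linarith
      · exact h
    have h3 := dist_coe_le (B p + Sbirk f α i (A p)) (B q + Sbirk f α i (A q))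
    have hyb : |B p - B q| < ε/2 := by
      have c1 := hycb p
      have c2 := hycb q
      rw [hy] at c1
      rw [abs_lt]
      constructor <;> [linarith [c1.1, c2.2]; linarith [c1.2, c2.1]]
    have hS := hwS (A p) (A q) hle i (le_of_lt hi)
    have habs2 : |B p + Sbirk f α i (A p) - (B q + Sbirk f α i (A q))|
        ≤ |B p - B q| + |Sbirk f α i (A p) - Sbirk f α i (A q)| := by
      rw [show B p + Sbirk f α i (A p) - (B q + Sbirk f α i (A q))
        = (B p - B q) + (Sbirk f α i (A p) - Sbirk f α i (A q)) by ring]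
      exact abs_add_le _ _
    have := lt_of_lt_of_le hABd h3
    linarith
  -- cardinality of each cell
  have hcell : ∀ k t : ℕ,
      ((E.filter (fun p => col p = k ∧ yc p = t)).card : ℝ)
        ≤ 2 * w ((k:ℝ)*ε) ((k:ℝ)*ε + ε) / ε + 1 := by
    intro k t
    set Wk := w ((k:ℝ)*ε) ((k:ℝ)*ε + ε) with hWk
    have hWk0 : 0 ≤ Wk := hw0 _ _
    set ψ : Torus2 → ℤ := fun p => ⌊w ((k:ℝ)*ε) (A p) / (ε/2)⌋ with hψ
    have hmem : ∀ p ∈ E.filter (fun p => col p = k ∧ yc p = t),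
        ψ p ∈ Finset.Icc (0:ℤ) ⌊Wk/(ε/2)⌋ := by
      intro p hp
      rw [Finset.mem_filter] at hp
      obtain ⟨hpE, hk, ht⟩ := hp
      have hb := hcolb p
      rw [hk] at hb
      have h1 : 0 ≤ w ((k:ℝ)*ε) (A p) := hw0 _ _
      have h2 : w ((k:ℝ)*ε) (A p) ≤ Wk := hWk ▸ hwmono (le_of_lt hb.2)
      rw [Finset.mem_Icc]
      constructor
      · simp only [hψ]
        exact Int.floor_nonneg.mpr (by positivity)
      · simp only [hψ]
        exact Int.floor_le_floor (by gcongr)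
    have hinj : Set.InjOn ψ (E.filter (fun p => col p = k ∧ yc p = t)) := by
      have main : ∀ r s : Torus2, r ∈ E → s ∈ E → r ≠ s → col r = k → col s = k →
          yc r = t → yc s = t → A r ≤ A s → ψ r ≠ ψ s := by
        intro r s hr hs hrs hcr hcs hyr hys hle
        have hstep := hpair r hr s hs hrs (hcr.trans hcs.symm) (hyr.trans hys.symm) hle
        have hbr := hcolb r
        rw [hcr] at hbr
        have hsplit : w ((k:ℝ)*ε) (A s) = w ((k:ℝ)*ε) (A r) + w (A r) (A s) :=
          hwadd hbr.1 hle
        have hΦle : w ((k:ℝ)*ε) (A r) + ε/2 ≤ w ((k:ℝ)*ε) (A s) := by linarith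
        have hdiv : w ((k:ℝ)*ε) (A r) / (ε/2) + 1 ≤ w ((k:ℝ)*ε) (A s) / (ε/2) := by
          have hε2 : (0:ℝ) < ε/2 := by positivity
          calc w ((k:ℝ)*ε) (A r) / (ε/2) + 1 = (w ((k:ℝ)*ε) (A r) + ε/2)/(ε/2) := by
                field_simp
            _ ≤ w ((k:ℝ)*ε) (A s) / (ε/2) := (div_le_div_iff_of_pos_right hε2).mpr hΦle
        have : ψ r < ψ s := by
          simp only [hψ]
          have h4 : ⌊w ((k:ℝ)*ε) (A r) / (ε/2)⌋ + 1 = ⌊w ((k:ℝ)*ε) (A r) / (ε/2) + 1⌋ :=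
            (Int.floor_add_one _).symm
          have h5 := Int.floor_le_floor hdiv
          omega
        omega
      intro p hp q hq hpq
      rw [Finset.mem_coe, Finset.mem_filter] at hp hq
      by_contra hne
      rcases le_total (A p) (A q) with h | h
      · exact main p q hp.1 hq.1 hne hp.2.1 hq.2.1 hp.2.2 hq.2.2 h hpq
      · exact main q p hq.1 hp.1 (Ne.symm hne) hq.2.1 hp.2.1 hq.2.2 hp.2.2 h hpq.symm
    have hcard := Finset.card_le_card_of_injOn ψ hmem hinj
    have hfl0 : (0:ℤ) ≤ ⌊Wk/(ε/2)⌋ := Int.floor_nonneg.mpr (by positivity)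
    have hIcc : (Finset.Icc (0:ℤ) ⌊Wk/(ε/2)⌋).card = (⌊Wk/(ε/2)⌋ + 1).toNat := by
      rw [Int.card_Icc, sub_zero]
    calc ((E.filter (fun p => col p = k ∧ yc p = t)).card : ℝ)
        ≤ (((⌊Wk/(ε/2)⌋ + 1).toNat : ℕ) : ℝ) := by
          exact_mod_cast le_trans hcard (le_of_eq hIcc)
      _ = ((⌊Wk/(ε/2)⌋ : ℝ) + 1) := by
          rw [show (((⌊Wk/(ε/2)⌋ + 1).toNat : ℕ) : ℝ) = (((⌊Wk/(ε/2)⌋ + 1).toNat : ℤ) : ℝ) by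
            norm_cast, Int.toNat_of_nonneg (by omega)]
          push_cast
          ring
      _ ≤ Wk/(ε/2) + 1 := by
          have := Int.floor_le (Wk/(ε/2))
          linarith
      _ = 2*Wk/ε + 1 := by
          rw [div_div_eq_mul_div, mul_comm Wk 2]
  -- fiberwise counting
  have hfiber1 : E.card = ∑ k ∈ Finset.range K, (E.filter (fun p => col p = k)).card :=
    Finset.card_eq_sum_card_fiberwise (fun p _ => Finset.mem_range.mpr (hcol_mem p))
  have hfiber2 : ∀ k : ℕ, (E.filter (fun p => col p = k)).card
      = ∑ t ∈ Finset.range M, (E.filter (fun p => col p = k ∧ yc p = t)).card := by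
    intro k
    rw [Finset.card_eq_sum_card_fiberwise (f := yc) (t := Finset.range M)
      (fun p _ => Finset.mem_range.mpr (hyc_mem p))]
    refine Finset.sum_congr rfl fun t _ => ?_
    rw [Finset.filter_filter]
  -- total variation over the columns
  have hKε : (K:ℝ)*ε ≤ 2 := by
    calc (K:ℝ)*ε ≤ (2/ε)*ε := mul_le_mul_of_nonneg_right hKle hε.le
      _ = 2 := by field_simp
  have hsumW : ∑ k ∈ Finset.range K, w ((k:ℝ)*ε) ((k:ℝ)*ε + ε) ≤ 3 * V * n := by
    have hswap : ∑ k ∈ Finset.range K, w ((k:ℝ)*ε) ((k:ℝ)*ε + ε)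
        = ∑ j ∈ Finset.range n, ∑ k ∈ Finset.range K,
            v ((j:ℝ)*α + (k:ℝ)*ε) ((j:ℝ)*α + (k:ℝ)*ε + ε) := by
      simp only [hw]
      rw [Finset.sum_comm]
      refine Finset.sum_congr rfl fun j _ => Finset.sum_congr rfl fun k _ => ?_
      rw [show (k:ℝ)*ε + (j:ℝ)*α = (j:ℝ)*α + (k:ℝ)*ε by ring,
          show (k:ℝ)*ε + ε + (j:ℝ)*α = (j:ℝ)*α + (k:ℝ)*ε + ε by ring]
    rw [hswap]
    calc ∑ j ∈ Finset.range n, ∑ k ∈ Finset.range K,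
            v ((j:ℝ)*α + (k:ℝ)*ε) ((j:ℝ)*α + (k:ℝ)*ε + ε)
        = ∑ j ∈ Finset.range n, v ((j:ℝ)*α) ((j:ℝ)*α + (K:ℝ)*ε) :=
          Finset.sum_congr rfl fun j _ => htel ((j:ℝ)*α) K
      _ ≤ ∑ j ∈ Finset.range n, 3*V :=
          Finset.sum_le_sum fun j _ => hv3 _ _ (by linarith)
      _ = 3*V*n := by
          rw [Finset.sum_const, Finset.card_range, nsmul_eq_mul]
          ring
  -- putting everything together
  have hWsum0 : 0 ≤ ∑ k ∈ Finset.range K, w ((k:ℝ)*ε) ((k:ℝ)*ε + ε) :=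
    Finset.sum_nonneg fun k _ => hw0 _ _
  have main : (E.card : ℝ) ≤ (M:ℝ) *
      (2 * (∑ k ∈ Finset.range K, w ((k:ℝ)*ε) ((k:ℝ)*ε + ε)) / ε + (K:ℝ)) := by
    calc (E.card : ℝ) = ∑ k ∈ Finset.range K, ∑ t ∈ Finset.range M,
          ((E.filter (fun p => col p = k ∧ yc p = t)).card : ℝ) := by
          rw [hfiber1]
          push_cast
          exact Finset.sum_congr rfl fun k _ => by
            rw [hfiber2 k]; push_cast; ring
      _ ≤ ∑ k ∈ Finset.range K, ∑ t ∈ Finset.range M,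
            (2 * w ((k:ℝ)*ε) ((k:ℝ)*ε + ε) / ε + 1) :=
          Finset.sum_le_sum fun k _ => Finset.sum_le_sum fun t _ => hcell k t
      _ = ∑ k ∈ Finset.range K, (M:ℝ) * (2 * w ((k:ℝ)*ε) ((k:ℝ)*ε + ε) / ε + 1) := by
          refine Finset.sum_congr rfl fun k _ => ?_
          rw [Finset.sum_const, Finset.card_range, nsmul_eq_mul]
      _ = (M:ℝ) * (∑ k ∈ Finset.range K, (2 * w ((k:ℝ)*ε) ((k:ℝ)*ε + ε) / ε + 1)) := by
          rw [Finset.mul_sum]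
      _ = (M:ℝ) * (2 * (∑ k ∈ Finset.range K, w ((k:ℝ)*ε) ((k:ℝ)*ε + ε)) / ε + (K:ℝ)) := by
          congr 1
          rw [Finset.sum_add_distrib, Finset.sum_const, Finset.card_range, nsmul_eq_mul, mul_one]
          congr 1
          rw [← Finset.sum_div, ← Finset.mul_sum]
  have hn1 : (1:ℝ) ≤ (n:ℝ) := by exact_mod_cast hn
  have h3Vn : (0:ℝ) ≤ 3*V*n :=
    mul_nonneg (mul_nonneg (by norm_num) hVnn) (Nat.cast_nonneg n)
  have step2 : (E.card:ℝ) ≤ (3/ε) * (2*(3*V*n)/ε + 2/ε) := by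
    refine le_trans main ?_
    have inner : 2 * (∑ k ∈ Finset.range K, w ((k:ℝ)*ε) ((k:ℝ)*ε + ε)) / ε + (K:ℝ)
        ≤ 2*(3*V*n)/ε + 2/ε := by
      apply add_le_add _ hKle
      exact (div_le_div_iff_of_pos_right hε).mpr (by linarith)
    have hinner0 : (0:ℝ) ≤ 2*(3*V*n)/ε + 2/ε := by
      have h1 : (0:ℝ) ≤ 2*(3*V*n)/ε := by
        apply div_nonneg _ hε.le
        linarith
      have h2 : (0:ℝ) ≤ 2/ε := by positivity
      linarith
    calc (M:ℝ) * (2 * (∑ k ∈ Finset.range K, w ((k:ℝ)*ε) ((k:ℝ)*ε + ε)) / ε + (K:ℝ))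
        ≤ (M:ℝ) * (2*(3*V*n)/ε + 2/ε) :=
          mul_le_mul_of_nonneg_left inner (Nat.cast_nonneg M)
      _ ≤ (3/ε) * (2*(3*V*n)/ε + 2/ε) :=
          mul_le_mul_of_nonneg_right hMle hinner0
  have heq : (3/ε) * (2*(3*V*n)/ε + 2/ε) = (18*V*n + 6)/ε^2 := by
    field_simp
    ring
  have hnum : 18*V*(n:ℝ) + 6 ≤ 20*(V+1)*n := by
    nlinarith [mul_nonneg hVnn (le_trans zero_le_one hn1)]
  calc (E.card:ℝ) ≤ (18*V*n + 6)/ε^2 := heq ▸ step2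
    _ ≤ 20*(V+1)*n/ε^2 :=
        (div_le_div_iff_of_pos_right (by positivity : (0:ℝ) < ε^2)).mpr hnum
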